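/- Assume the function u: A → B is injective. For every 0 ≤ i ≤ m, the functor given by post-composition with Q restricts to a functor Q_!: Nec^tnd(C(μ,u))_{i,m+1} → Nec^tnd(Δ[m+1])_{i,m+1} between the categories of totally non-degenerate necklaces, and this restricted functor is a discrete fibration. -/

import Mathlib

open CategoryTheory Simplicial Opposite Limits

set_option synthInstance.maxHeartbeats 1000000
set_option maxHeartbeats 1000000

namespace Paper

/-- A simplex is degenerate if it is the image of a strictly lower-dimensional simplex
under a surjective simplicial operator. -/
def IsDegenerate (X : SSet) {n : ℕ} (x : X.obj (op (SimplexCategory.mk n))) : Prop :=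
  ∃ (k : ℕ) (f : SimplexCategory.mk n ⟶ SimplexCategory.mk k)
    (y : X.obj (op (SimplexCategory.mk k))),
      k < n ∧ Function.Surjective f.toOrderHom ∧ X.map f.op y = x

/-- The combinatorial data of a necklace `Δ[m₁] ∨ ⋯ ∨ Δ[mₜ]`. -/
structure Necklace where
  beads : List ℕ
  ne : beads ≠ []
  pos : 1 < beads.length → ∀ x ∈ beads, 0 < x

namespace Necklace

/-- The index of the last vertex of the necklace. -/
def total (N : Necklace) : ℕ := N.beads.sum

/-- The position of the `j`-th joint of the necklace. -/
def cum (N : Necklace) (j : ℕ) : ℕ := (N.beads.take j).sum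

lemma cum_le_total (N : Necklace) (j : ℕ) : N.cum j ≤ N.total := by
  have := List.sum_take_add_sum_drop N.beads j
  unfold cum total
  omega

lemma cum_succ_eq (N : Necklace) {j : ℕ} (hj : j < N.beads.length) :
    N.cum (j + 1) = N.cum j + N.beads.get ⟨j, hj⟩ :=
  List.sum_take_succ _ _ _

private lemma exists_interval : ∀ (l : List ℕ), l ≠ [] → ∀ k : ℕ, k ≤ l.sum →
    ∃ j, j < l.length ∧ (l.take j).sum ≤ k ∧ k ≤ (l.take (j + 1)).sum := by
  intro l
  induction l with
  | nil => intro h; exact absurd rfl h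
  | cons a t ih =>
    intro _ k hk
    by_cases hka : k ≤ a
    · exact ⟨0, by simp, by simp, by simpa using hka⟩
    · push_neg at hka
      rcases eq_or_ne t [] with rfl | ht
      · simp only [List.sum_cons, List.sum_nil, Nat.add_zero] at hk
        omega
      · simp only [List.sum_cons] at hk
        obtain ⟨j, hj, h1, h2⟩ := ih ht (k - a) (by omega)
        refine ⟨j + 1, by simp only [List.length_cons]; omega, ?_, ?_⟩
        · simp only [List.take_succ_cons, List.sum_cons]
          omega
        · simp only [List.take_succ_cons, List.sum_cons]
          omega

/-- The predicate: a simplex of `Δ[N.total]` lies in the `j`-th bead. -/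
def InBead (N : Necklace) (j : ℕ) {x : SimplexCategory}
    (σ : x ⟶ SimplexCategory.mk N.total) : Prop :=
  ∀ i, N.cum j ≤ (σ.toOrderHom i : ℕ) ∧ (σ.toOrderHom i : ℕ) ≤ N.cum (j + 1)

/-- The predicate defining the simplices of the necklace, as a subcomplex of
`Δ[N.total]`: those simplices contained in some bead. -/
def IsSimplex (N : Necklace) {x : SimplexCategory}
    (σ : x ⟶ SimplexCategory.mk N.total) : Prop :=
  ∃ j, j < N.beads.length ∧ N.InBead j σ

/-- The simplicial set `Δ[m₁] ∨ ⋯ ∨ Δ[mₜ]` associated to a necklace, realized as the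
subcomplex of `Δ[N.total]` consisting of the simplices lying in one of the beads. -/
def toSSet (N : Necklace) : SSet where
  obj X := { σ : X.unop ⟶ SimplexCategory.mk N.total // N.IsSimplex σ }
  map f := TypeCat.ofHom fun σ => ⟨f.unop ≫ σ.1, by
    obtain ⟨j, hj, hb⟩ := σ.2
    exact ⟨j, hj, fun i => hb _⟩⟩
  map_id X := by
    ext σ : 3
    exact Subtype.ext (Category.id_comp _)
  map_comp f g := by
    ext σ : 3
    exact Subtype.ext rfl

/-- The vertices of a necklace. -/
def vertex (N : Necklace) (k : Fin (N.total + 1)) :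
    N.toSSet.obj (op (SimplexCategory.mk 0)) :=
  ⟨SimplexCategory.Hom.mk (OrderHom.const _ k), by
    obtain ⟨j, hj, h1, h2⟩ := exists_interval N.beads N.ne k (Nat.lt_succ_iff.mp k.isLt)
    exact ⟨j, hj, fun _ => ⟨h1, h2⟩⟩⟩

/-- A simplex of a necklace lies in the last bead. -/
def InLastBead (N : Necklace) {x : SimplexCategoryᵒᵖ} (σ : N.toSSet.obj x) : Prop :=
  ∀ i, N.cum (N.beads.length - 1) ≤ (σ.1.toOrderHom i : ℕ)

/-- The `j`-th bead of a necklace, as a simplex of the necklace. -/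
def beadSimplex (N : Necklace) (j : ℕ) (hj : j < N.beads.length) :
    N.toSSet.obj (op (SimplexCategory.mk (N.beads.get ⟨j, hj⟩))) :=
  ⟨SimplexCategory.Hom.mk
    { toFun := fun i => ⟨N.cum j + i, by
        have h1 := N.cum_succ_eq hj
        have h2 := N.cum_le_total (j + 1)
        have h3 := i.isLt
        simp only [List.get_eq_getElem, SimplexCategory.len_mk] at h1 h3 ⊢
        omega⟩
      monotone' := fun i i' hii' => Nat.add_le_add_left hii' _ },
   ⟨j, hj, fun i => by
      refine ⟨Nat.le_add_right _ _, ?_⟩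
      have h1 := N.cum_succ_eq hj
      have h3 := Nat.lt_succ_iff.mp i.isLt
      simp only [List.get_eq_getElem, SimplexCategory.len_mk] at h1 h3
      show N.cum j + (i : ℕ) ≤ N.cum (j + 1)
      omega⟩⟩

end Necklace

/-- A necklace in a simplicial set `K` from `a` to `b`: a bi-pointed map from a necklace. -/
structure NecklaceIn (K : SSet) (a b : K.obj (op (SimplexCategory.mk 0))) where
  shape : Necklace
  map : shape.toSSet ⟶ K
  hα : map.app (op (SimplexCategory.mk 0)) (shape.vertex 0) = a
  hω : map.app (op (SimplexCategory.mk 0)) (shape.vertex (Fin.last _)) = b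

namespace NecklaceIn

variable {K : SSet} {a b : K.obj (op (SimplexCategory.mk 0))}

/-- Morphisms of necklaces in `K` from `a` to `b`: bi-pointed maps of necklaces over `K`. -/
structure NecHom (S T : NecklaceIn K a b) where
  g : S.shape.toSSet ⟶ T.shape.toSSet
  hα : g.app (op (SimplexCategory.mk 0)) (S.shape.vertex 0) = T.shape.vertex 0
  hω : g.app (op (SimplexCategory.mk 0)) (S.shape.vertex (Fin.last _)) =
        T.shape.vertex (Fin.last _)
  w : g ≫ T.map = S.map

lemma NecHom.ext' {S T : NecklaceIn K a b} {f g : NecHom S T} (h : f.g = g.g) : f = g := by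
  cases f; cases g; cases h; rfl

instance : Category (NecklaceIn K a b) where
  Hom := NecHom
  id S := ⟨𝟙 _, rfl, rfl, Category.id_comp _⟩
  comp {S T U} f g := ⟨f.g ≫ g.g,
    by rw [FunctorToTypes.comp, f.hα, g.hα],
    by rw [FunctorToTypes.comp, f.hω, g.hω],
    by rw [Category.assoc, g.w, f.w]⟩
  id_comp f := NecHom.ext' (Category.id_comp _)
  comp_id f := NecHom.ext' (Category.comp_id _)
  assoc f g h := NecHom.ext' (Category.assoc _ _ _)

end NecklaceIn

/-- Post-composition with a map of simplicial sets, as a functor between categories of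
necklaces. -/
def postcomp {K L : SSet} (q : K ⟶ L) (a b : K.obj (op (SimplexCategory.mk 0))) :
    NecklaceIn K a b ⥤
      NecklaceIn L (q.app (op (SimplexCategory.mk 0)) a) (q.app (op (SimplexCategory.mk 0)) b) where
  obj S := ⟨S.shape, S.map ≫ q,
    by rw [FunctorToTypes.comp, S.hα],
    by rw [FunctorToTypes.comp, S.hω]⟩
  map {S T} f := ⟨f.g, f.hα, f.hω, by rw [← Category.assoc]; exact congrArg (· ≫ q) f.w⟩
  map_id S := NecklaceIn.NecHom.ext' rfl
  map_comp f g := NecklaceIn.NecHom.ext' rfl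

/-- A necklace in `K` is totally non-degenerate if each of its beads is a
non-degenerate simplex of `K`. -/
def TotallyNondeg {K : SSet} {a b : K.obj (op (SimplexCategory.mk 0))}
    (S : NecklaceIn K a b) : Prop :=
  ∀ (j : ℕ) (hj : j < S.shape.beads.length),
    ¬ IsDegenerate K
      (S.map.app (op (SimplexCategory.mk (S.shape.beads.get ⟨j, hj⟩)))
        (S.shape.beadSimplex j hj))

/-- A functor is a discrete fibration if every morphism into the image of an object
admits a unique lift with prescribed codomain. -/
def IsDiscreteFibration {E C : Type*} [Category E] [Category C] (p : E ⥤ C) : Prop :=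
  ∀ (e : E) (c : C) (g : c ⟶ p.obj e),
    ∃! φ : Σ e' : E, e' ⟶ e, ∃ h : p.obj φ.1 = c, p.map φ.2 = eqToHom h ≫ g

/-- The vertex `k` of the standard simplex `Δ[q]`, as a `0`-simplex. -/
def vertStd (q : ℕ) (k : Fin (q + 1)) : (Δ[q] : SSet).obj (op (SimplexCategory.mk 0)) :=
  (SSet.stdSimplex.objEquiv).symm (SimplexCategory.const _ _ k)

/-- The vertex of `Δ[q]` underlying a `0`-simplex of `Δ[q]`. -/
def vertexOf (q : ℕ) (s : (Δ[q] : SSet).obj (op (SimplexCategory.mk 0))) : Fin (q + 1) :=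
  (SSet.stdSimplex.objEquiv s).toOrderHom 0


/-- The vertex `k` of `Δ[q]`, as a map `Δ[0] ⟶ Δ[q]`. -/
def stdVert (q : ℕ) (k : Fin (q + 1)) : (Δ[0] : SSet) ⟶ (Δ[q] : SSet) :=
  SSet.stdSimplex.map (SimplexCategory.const _ _ k)

section AuxGeneral

lemma isDegenerate_map {X Y : SSet} (q : X ⟶ Y) {n : ℕ}
    {x : X.obj (op (SimplexCategory.mk n))} (h : IsDegenerate X x) :
    IsDegenerate Y (q.app _ x) := by
  obtain ⟨k, f, y, h1, h2, h3⟩ := h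
  exact ⟨k, f, q.app _ y, h1, h2, by rw [← h3, FunctorToTypes.naturality]⟩

lemma std_nondeg {q n : ℕ} (x : (Δ[q] : SSet).obj (op (SimplexCategory.mk n)))
    (hx : Function.Injective (SSet.stdSimplex.objEquiv x).toOrderHom) :
    ¬ IsDegenerate Δ[q] x := by
  rintro ⟨k, f, y, hk, hf, hxy⟩
  rw [SSet.stdSimplex.map_apply] at hxy
  apply_fun (SSet.stdSimplex.objEquiv) at hxy
  rw [Equiv.apply_symm_apply] at hxy
  rw [← hxy] at hx
  have hfi : Function.Injective f.toOrderHom := fun a b hab => hx (by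
    show (SSet.stdSimplex.objEquiv y).toOrderHom (f.toOrderHom a) =
      (SSet.stdSimplex.objEquiv y).toOrderHom (f.toOrderHom b)
    rw [hab])
  have := Fintype.card_le_of_injective _ hfi
  simp [Fintype.card_fin] at this
  omega

lemma factor_of_eq {n q : ℕ} (e : SimplexCategory.mk (n+1) ⟶ SimplexCategory.mk q)
    (j : Fin (n+1)) (hj : e.toOrderHom j.castSucc = e.toOrderHom j.succ) :
    SimplexCategory.σ j ≫ (SimplexCategory.δ j.castSucc ≫ e) = e := by
  apply SimplexCategory.Hom.ext
  apply OrderHom.ext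
  funext i
  show e.toOrderHom ((j.castSucc).succAbove (j.predAbove i)) = e.toOrderHom i
  rcases eq_or_ne i j.castSucc with h | h
  · subst h
    rw [Fin.predAbove_castSucc_self, Fin.succAbove_castSucc_self, ← hj]
  · rw [Fin.succAbove_predAbove h]

lemma deg_of_noninj {q n : ℕ} {X : SSet} (F : (Δ[q] : SSet) ⟶ X)
    (x : (Δ[q] : SSet).obj (op (SimplexCategory.mk n)))
    (hx : ¬ Function.Injective (SSet.stdSimplex.objEquiv x).toOrderHom) :
    IsDegenerate X (F.app _ x) := by
  apply isDegenerate_map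
  rcases n with _ | n
  · exact absurd (fun a b _ => @Subsingleton.elim (Fin 1) _ a b) hx
  set e := SSet.stdSimplex.objEquiv x with he
  have : ∃ j : Fin (n+1), e.toOrderHom j.castSucc = e.toOrderHom j.succ := by
    by_contra hcon
    push_neg at hcon
    apply hx
    have : StrictMono e.toOrderHom := by
      rw [Fin.strictMono_iff_lt_succ]
      intro j
      exact lt_of_le_of_ne (e.toOrderHom.monotone (Fin.castSucc_le_succ j)) (hcon j)
    exact this.injective
  obtain ⟨j, hj⟩ := this
  refine ⟨n, SimplexCategory.σ j,
    (SSet.stdSimplex.objEquiv).symm (SimplexCategory.δ j.castSucc ≫ e),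
    Nat.lt_succ_self n, ?_, ?_⟩
  · rw [← SimplexCategory.epi_iff_surjective]
    infer_instance
  · rw [SSet.stdSimplex.map_apply]
    simp only [Equiv.apply_symm_apply, Quiver.Hom.unop_op]
    rw [factor_of_eq e j hj]
    exact (SSet.stdSimplex.objEquiv).symm_apply_apply x

lemma pushout_cases.{w} {X Y Z : SSet.{w}} (f : X ⟶ Y) (g : X ⟶ Z) (n : SimplexCategoryᵒᵖ)
    (x : (pushout f g).obj n) :
    (∃ y, (pushout.inl f g).app n y = x) ∨ (∃ z, (pushout.inr f g).app n z = x) := by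
  obtain ⟨j, y, hy⟩ := Types.jointly_surjective_of_isColimit
    (isColimitOfPreserves ((evaluation SimplexCategoryᵒᵖ (Type w)).obj n)
      (colimit.isColimit (span f g))) x
  match j with
  | WalkingCospan.one =>
      left
      refine ⟨(f.app n) y, ?_⟩
      have hw := colimit.w (span f g) WalkingSpan.Hom.fst
      rw [← hy]
      exact congrArg (fun (t : _ ⟶ pushout f g) => t.app n y)
        (by rw [← hw]; simp : f ≫ pushout.inl f g = colimit.ι (span f g) WalkingSpan.zero)
  | WalkingSpan.left => exact Or.inl ⟨y, hy⟩
  | WalkingSpan.right => exact Or.inr ⟨y, hy⟩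

lemma sigma_cases.{w} {β : Type} (f : β → SSet.{w}) (n : SimplexCategoryᵒᵖ) (x : (∐ f).obj n) :
    ∃ b y, (Sigma.ι f b).app n y = x := by
  obtain ⟨⟨b⟩, y, hy⟩ := Types.jointly_surjective_of_isColimit
    (isColimitOfPreserves ((evaluation SimplexCategoryᵒᵖ (Type w)).obj n)
      (colimit.isColimit (Discrete.functor f))) x
  exact ⟨b, y, hy⟩

lemma necklaceIn_ext {K : SSet} {a b : K.obj (op (SimplexCategory.mk 0))}
    {S T : NecklaceIn K a b} (hs : S.shape = T.shape) (hm : HEq S.map T.map) : S = T := by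
  obtain ⟨s1, m1, p1, q1⟩ := S
  obtain ⟨s2, m2, p2, q2⟩ := T
  dsimp at hs hm
  subst hs
  have := eq_of_heq hm
  subst this
  rfl

lemma fullsub_ext {C : Type*} [Category C] {Z : C → Prop}
    {X Y : CategoryTheory.ObjectProperty.FullSubcategory Z} (h : X.obj = Y.obj) : X = Y := by
  obtain ⟨x, hx⟩ := X
  obtain ⟨y, hy⟩ := Y
  dsimp at h
  subst h
  rfl

lemma heq_eqToHom_comp {C : Type*} [Category C] {X Y Z : C} (e : X = Y) (f : Y ⟶ Z) :
    HEq (eqToHom e ≫ f) f := by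
  subst e
  rw [eqToHom_refl, Category.id_comp]

lemma fullsub_eqToHom_comp_g {K : SSet} {a b : K.obj (op (SimplexCategory.mk 0))}
    {Z : NecklaceIn K a b → Prop} {S T U : CategoryTheory.ObjectProperty.FullSubcategory Z} (h : S = T)
    (epf : S.obj.shape.toSSet = T.obj.shape.toSSet) (f : T ⟶ U) :
    NecklaceIn.NecHom.g (eqToHom h ≫ f).hom = eqToHom epf ≫ NecklaceIn.NecHom.g f.hom := by
  subst h
  rw [show epf = rfl from rfl]
  rw [eqToHom_refl, eqToHom_refl, Category.id_comp, Category.id_comp]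

lemma heq_comp {C : Type*} [Category C] {X X' Y Z : C} (hX : X = X')
    {f : X ⟶ Y} {f' : X' ⟶ Y} (h : HEq f f') (g : Y ⟶ Z) :
    HEq (f ≫ g) (f' ≫ g) := by
  subst hX
  rw [eq_of_heq h]

lemma necHom_g_eqToHom_comp_heq {K : SSet} {a b : K.obj (op (SimplexCategory.mk 0))}
    {Z : NecklaceIn K a b → Prop} {S T U : CategoryTheory.ObjectProperty.FullSubcategory Z}
    (h : S = T) (f : T ⟶ U) :
    HEq (NecklaceIn.NecHom.g (eqToHom h ≫ f).hom) (NecklaceIn.NecHom.g f.hom) := by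
  subst h
  rw [eqToHom_refl, Category.id_comp]

end AuxGeneral

section Cone

variable (A B : Type) (u : A → B) (l m : ℕ)
  (μ : SimplexCategory.mk l ⟶ SimplexCategory.mk m)

/-- The map `∐_{a ∈ A} Δ[l] ⟶ ∐_{b ∈ B} Δ[m]` sending the copy of `Δ[l]` indexed by `a`
into the copy of `Δ[m]` indexed by `u a` via `μ`. -/
noncomputable def toLB : (∐ fun _ : A => (Δ[l] : SSet)) ⟶ (∐ fun _ : B => (Δ[m] : SSet)) :=
  Sigma.desc fun a => SSet.stdSimplex.map μ ≫ Sigma.ι (fun _ : B => (Δ[m] : SSet)) (u a)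

/-- The map `∐_{a ∈ A} Δ[l] ⟶ ∐_{a ∈ A} Δ[l+1]` given on each summand by the face
`d^{l+1}`. -/
noncomputable def toLA1 : (∐ fun _ : A => (Δ[l] : SSet)) ⟶ (∐ fun _ : A => (Δ[l+1] : SSet)) :=
  Sigma.desc fun a =>
    SSet.stdSimplex.map (SimplexCategory.δ (Fin.last (l + 1))) ≫
      Sigma.ι (fun _ : A => (Δ[l+1] : SSet)) a

/-- The amalgam `(∐_{b ∈ B} Δ[m]) ⊔_{∐_{a ∈ A} Δ[l]} (∐_{a ∈ A} Δ[l+1])`. -/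
noncomputable def LL : SSet := pushout (toLB A B u l m μ) (toLA1 A l)

/-- The left leg of the defining span of `C(μ,u)`: it picks, in the `(i,b)`-summand, the
vertex `i` of the copy of `Δ[m]` indexed by `b`, and in the `a`-summand the vertex `l+1`
of the copy of `Δ[l+1]` indexed by `a`. -/
noncomputable def midToL :
    (∐ fun _ : ((Fin (m + 1) × B) ⊕ A) => (Δ[0] : SSet)) ⟶ LL A B u l m μ :=
  Sigma.desc fun (x : (Fin (m + 1) × B) ⊕ A) =>
    match x with
    | Sum.inl (i, b) => stdVert m i ≫ Sigma.ι (fun _ : B => (Δ[m] : SSet)) b ≫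
        pushout.inl (toLB A B u l m μ) (toLA1 A l)
    | Sum.inr a => stdVert (l + 1) (Fin.last (l + 1)) ≫
        Sigma.ι (fun _ : A => (Δ[l+1] : SSet)) a ≫
        pushout.inr (toLB A B u l m μ) (toLA1 A l)

/-- The right leg of the defining span of `C(μ,u)`: it sends the `(i,b)`-summands to the
point indexed by `i` and the `a`-summands to the point indexed by `m+1`. -/
noncomputable def midToR :
    (∐ fun _ : ((Fin (m + 1) × B) ⊕ A) => (Δ[0] : SSet)) ⟶
      (∐ fun _ : Fin (m + 2) => (Δ[0] : SSet)) :=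
  Sigma.desc fun (x : (Fin (m + 1) × B) ⊕ A) =>
    match x with
    | Sum.inl (i, _) => Sigma.ι (fun _ : Fin (m + 2) => (Δ[0] : SSet)) i.castSucc
    | Sum.inr _ => Sigma.ι (fun _ : Fin (m + 2) => (Δ[0] : SSet)) (Fin.last (m + 1))

/-- The simplicial set `C(μ,u)`, defined as the pushout of the span with legs `midToL`
and `midToR`. -/
noncomputable def CC : SSet := pushout (midToL A B u l m μ) (midToR A B m)

/-- The vertices `0, 1, …, m+1` of `C(μ,u)`, i.e. the images of the points of
`∐_{0 ≤ i ≤ m+1} Δ[0]` under the canonical map to the pushout. -/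
noncomputable def vertC (i : Fin (m + 2)) :
    (CC A B u l m μ).obj (op (SimplexCategory.mk 0)) :=
  (Sigma.ι (fun _ : Fin (m + 2) => (Δ[0] : SSet)) i ≫
      pushout.inr (midToL A B u l m μ) (midToR A B m)).app
    (op (SimplexCategory.mk 0)) (vertStd 0 0)

/-- The map `μ + 1 : [l+1] ⟶ [m+1]` extending `μ` by sending `l+1` to `m+1`. -/
def muPlus : SimplexCategory.mk (l + 1) ⟶ SimplexCategory.mk (m + 1) :=
  SimplexCategory.Hom.mk
    { toFun := fun i =>
        if h : (i : ℕ) < l + 1 then (μ.toOrderHom ⟨(i : ℕ), h⟩).castSucc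
        else Fin.last (m + 1)
      monotone' := by
        intro i j hij
        by_cases hi : (i : ℕ) < l + 1 <;> by_cases hj : (j : ℕ) < l + 1
        · simp only [hi, hj, dif_pos]
          exact Fin.castSucc_le_castSucc_iff.mpr (μ.toOrderHom.monotone hij)
        · simp only [hi, hj, dif_pos, dif_neg, not_false_iff]
          exact Fin.le_last _
        · exfalso
          have h' : (i : ℕ) ≤ (j : ℕ) := hij
          omega
        · simp only [hi, hj, dif_neg, not_false_iff]
          exact le_refl _ }


lemma muPlus_inj (hμ : Function.Injective μ.toOrderHom) :
    Function.Injective (muPlus l m μ).toOrderHom := by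
  intro x y hxy
  simp only [muPlus, SimplexCategory.Hom.toOrderHom_mk, OrderHom.coe_mk] at hxy
  by_cases hx : (x : ℕ) < l + 1 <;> by_cases hy : (y : ℕ) < l + 1
  · rw [dif_pos hx, dif_pos hy] at hxy
    have := hμ (Fin.castSucc_injective _ hxy)
    have hv := congrArg Fin.val this
    exact Fin.ext hv
  · rw [dif_pos hx, dif_neg hy] at hxy
    exact absurd hxy (Fin.ne_of_lt (Fin.castSucc_lt_last _))
  · rw [dif_neg hx, dif_pos hy] at hxy
    exact absurd hxy.symm (Fin.ne_of_lt (Fin.castSucc_lt_last _))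
  · have hxb : (x : ℕ) < l + 2 := x.isLt
    have hyb : (y : ℕ) < l + 2 := y.isLt
    have hx' : (x : ℕ) = l + 1 := by omega
    have hy' : (y : ℕ) = l + 1 := by omega
    exact Fin.ext (by rw [hx', hy'])

lemma cc_cases (n : SimplexCategoryᵒᵖ) (x : (CC A B u l m μ).obj n) :
    (∃ (b : B) (σ : (Δ[m] : SSet).obj n),
      ((Sigma.ι (fun _ : B => (Δ[m] : SSet)) b ≫
        pushout.inl (toLB A B u l m μ) (toLA1 A l) ≫
        pushout.inl (midToL A B u l m μ) (midToR A B m))).app n σ = x) ∨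
    (∃ (a : A) (τ : (Δ[l+1] : SSet).obj n),
      ((Sigma.ι (fun _ : A => (Δ[l+1] : SSet)) a ≫
        pushout.inr (toLB A B u l m μ) (toLA1 A l) ≫
        pushout.inl (midToL A B u l m μ) (midToR A B m))).app n τ = x) ∨
    (∃ (i' : Fin (m + 2)) (y : (Δ[0] : SSet).obj n),
      ((Sigma.ι (fun _ : Fin (m + 2) => (Δ[0] : SSet)) i' ≫
        pushout.inr (midToL A B u l m μ) (midToR A B m))).app n y = x) := by
  rcases pushout_cases (midToL A B u l m μ) (midToR A B m) n x with ⟨y, hy⟩ | ⟨z, hz⟩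
  · rcases pushout_cases (toLB A B u l m μ) (toLA1 A l) n y with ⟨w, hw⟩ | ⟨w, hw⟩
    · obtain ⟨b, σ, hσ⟩ := sigma_cases (fun _ : B => (Δ[m] : SSet)) n w
      refine Or.inl ⟨b, σ, ?_⟩
      subst hy hw hσ; rfl
    · obtain ⟨a, τ, hτ⟩ := sigma_cases (fun _ : A => (Δ[l+1] : SSet)) n w
      refine Or.inr (Or.inl ⟨a, τ, ?_⟩)
      subst hy hw hτ; rfl
  · obtain ⟨i', y, hy⟩ := sigma_cases (fun _ : Fin (m + 2) => (Δ[0] : SSet)) n z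
    refine Or.inr (Or.inr ⟨i', y, ?_⟩)
    rw [FunctorToTypes.comp, hy, hz]

lemma cc_main (hμ : Function.Injective μ.toOrderHom)
    (Q : CC A B u l m μ ⟶ (Δ[m+1] : SSet))
    (hQB : ∀ b : B,
      Sigma.ι (fun _ : B => (Δ[m] : SSet)) b ≫
        pushout.inl (toLB A B u l m μ) (toLA1 A l) ≫
        pushout.inl (midToL A B u l m μ) (midToR A B m) ≫ Q =
      SSet.stdSimplex.map (SimplexCategory.δ (Fin.last (m + 1))))
    (hQA : ∀ a : A,
      Sigma.ι (fun _ : A => (Δ[l+1] : SSet)) a ≫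
        pushout.inr (toLB A B u l m μ) (toLA1 A l) ≫
        pushout.inl (midToL A B u l m μ) (midToR A B m) ≫ Q =
      SSet.stdSimplex.map (muPlus l m μ))
    (hQR : ∀ i : Fin (m + 2),
      Sigma.ι (fun _ : Fin (m + 2) => (Δ[0] : SSet)) i ≫
        pushout.inr (midToL A B u l m μ) (midToR A B m) ≫ Q =
      stdVert (m + 1) i)
    {n : ℕ} (x : (CC A B u l m μ).obj (op (SimplexCategory.mk n))) :
    IsDegenerate (CC A B u l m μ) x ∨
      ¬ IsDegenerate Δ[m+1] (Q.app (op (SimplexCategory.mk n)) x) := by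
  rcases cc_cases A B u l m μ (op (SimplexCategory.mk n)) x with
    ⟨b, σ, h⟩ | ⟨a, τ, h⟩ | ⟨i', y, h⟩
  · by_cases hσ : Function.Injective (SSet.stdSimplex.objEquiv σ).toOrderHom
    · right
      have hQx : Q.app (op (SimplexCategory.mk n)) x =
          (SSet.stdSimplex.map (SimplexCategory.δ (Fin.last (m+1)))).app
            (op (SimplexCategory.mk n)) σ := by
        rw [← h]
        show ((Sigma.ι (fun _ : B => (Δ[m] : SSet)) b ≫
          pushout.inl (toLB A B u l m μ) (toLA1 A l) ≫
          pushout.inl (midToL A B u l m μ) (midToR A B m)) ≫ Q).app _ σ = _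
        rw [show (Sigma.ι (fun _ : B => (Δ[m] : SSet)) b ≫
          pushout.inl (toLB A B u l m μ) (toLA1 A l) ≫
          pushout.inl (midToL A B u l m μ) (midToR A B m)) ≫ Q =
          SSet.stdSimplex.map (SimplexCategory.δ (Fin.last (m+1))) from by
            exact (Category.assoc _ _ _).trans ((whisker_eq _ (Category.assoc _ _ _)).trans (hQB b))]
      rw [hQx]
      apply std_nondeg
      have hcomp : (SSet.stdSimplex.objEquiv)
          ((SSet.stdSimplex.map (SimplexCategory.δ (Fin.last (m+1)))).app
            (op (SimplexCategory.mk n)) σ) =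
          (SSet.stdSimplex.objEquiv σ) ≫ SimplexCategory.δ (Fin.last (m+1)) := rfl
      rw [hcomp]
      exact fun a b hab => hσ (Fin.succAbove_right_injective hab)
    · left
      rw [← h]
      exact deg_of_noninj _ σ hσ
  · by_cases hτ : Function.Injective (SSet.stdSimplex.objEquiv τ).toOrderHom
    · right
      have hQx : Q.app (op (SimplexCategory.mk n)) x =
          (SSet.stdSimplex.map (muPlus l m μ)).app (op (SimplexCategory.mk n)) τ := by
        rw [← h]
        show ((Sigma.ι (fun _ : A => (Δ[l+1] : SSet)) a ≫
          pushout.inr (toLB A B u l m μ) (toLA1 A l) ≫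
          pushout.inl (midToL A B u l m μ) (midToR A B m)) ≫ Q).app _ τ = _
        rw [show (Sigma.ι (fun _ : A => (Δ[l+1] : SSet)) a ≫
          pushout.inr (toLB A B u l m μ) (toLA1 A l) ≫
          pushout.inl (midToL A B u l m μ) (midToR A B m)) ≫ Q =
          SSet.stdSimplex.map (muPlus l m μ) from by
            exact (Category.assoc _ _ _).trans ((whisker_eq _ (Category.assoc _ _ _)).trans (hQA a))]
      rw [hQx]
      apply std_nondeg
      have hcomp : (SSet.stdSimplex.objEquiv)
          ((SSet.stdSimplex.map (muPlus l m μ)).app (op (SimplexCategory.mk n)) τ) =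
          (SSet.stdSimplex.objEquiv τ) ≫ muPlus l m μ := rfl
      rw [hcomp]
      exact fun a b hab => hτ (muPlus_inj l m μ hμ hab)
    · left
      rw [← h]
      exact deg_of_noninj _ τ hτ
  · rcases n with _ | n
    · right
      have hQx : Q.app (op (SimplexCategory.mk 0)) x =
          (stdVert (m+1) i').app (op (SimplexCategory.mk 0)) y := by
        rw [← h]
        show ((Sigma.ι (fun _ : Fin (m + 2) => (Δ[0] : SSet)) i' ≫
          pushout.inr (midToL A B u l m μ) (midToR A B m)) ≫ Q).app _ y = _
        rw [show (Sigma.ι (fun _ : Fin (m + 2) => (Δ[0] : SSet)) i' ≫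
          pushout.inr (midToL A B u l m μ) (midToR A B m)) ≫ Q = stdVert (m+1) i' from by
            exact (Category.assoc _ _ _).trans (hQR i')]
      rw [hQx]
      apply std_nondeg
      exact fun a b _ => @Subsingleton.elim (Fin 1) _ a b
    · left
      rw [← h]
      refine deg_of_noninj _ y ?_
      intro hinj
      have h01 := hinj (a₁ := (0 : Fin (n+2))) (a₂ := (1 : Fin (n+2)))
        (@Subsingleton.elim (Fin 1) _ _ _)
      simp [Fin.ext_iff] at h01

/-- Assume `u : A → B` is injective. For every `0 ≤ i ≤ m`, the functor
given by post-composition with `Q` restricts to a functor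
`Q_! : Nec^tnd(C(μ,u))_{i,m+1} ⥤ Nec^tnd(Δ[m+1])_{i,m+1}` between the full subcategories
of totally non-degenerate necklaces, and this restricted functor is a discrete
fibration. -/
theorem statement_6 (hμ : Function.Injective μ.toOrderHom)
    (hu : Function.Injective u) (i : Fin (m + 1))
    (Q : CC A B u l m μ ⟶ (Δ[m+1] : SSet))
    (hQB : ∀ b : B,
      Sigma.ι (fun _ : B => (Δ[m] : SSet)) b ≫
        pushout.inl (toLB A B u l m μ) (toLA1 A l) ≫
        pushout.inl (midToL A B u l m μ) (midToR A B m) ≫ Q =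
      SSet.stdSimplex.map (SimplexCategory.δ (Fin.last (m + 1))))
    (hQA : ∀ a : A,
      Sigma.ι (fun _ : A => (Δ[l+1] : SSet)) a ≫
        pushout.inr (toLB A B u l m μ) (toLA1 A l) ≫
        pushout.inl (midToL A B u l m μ) (midToR A B m) ≫ Q =
      SSet.stdSimplex.map (muPlus l m μ))
    (hQR : ∀ i : Fin (m + 2),
      Sigma.ι (fun _ : Fin (m + 2) => (Δ[0] : SSet)) i ≫
        pushout.inr (midToL A B u l m μ) (midToR A B m) ≫ Q =
      stdVert (m + 1) i)
    :
    ∃ hpres : ∀ S : NecklaceIn (CC A B u l m μ) (vertC A B u l m μ i.castSucc)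
        (vertC A B u l m μ (Fin.last (m + 1))),
        TotallyNondeg S →
          TotallyNondeg
            ((postcomp Q (vertC A B u l m μ i.castSucc)
              (vertC A B u l m μ (Fin.last (m + 1)))).obj S),
      IsDiscreteFibration
        (ObjectProperty.lift (fun T => TotallyNondeg T)
          (ObjectProperty.ι (fun S => TotallyNondeg S) ⋙
            postcomp Q (vertC A B u l m μ i.castSucc)
              (vertC A B u l m μ (Fin.last (m + 1))))
          (fun S => hpres S.obj S.property)) := by
  have main := fun {n : ℕ} x => cc_main A B u l m μ hμ Q hQB hQA hQR (n := n) x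
  have hpres : ∀ S : NecklaceIn (CC A B u l m μ) (vertC A B u l m μ i.castSucc)
      (vertC A B u l m μ (Fin.last (m + 1))),
      TotallyNondeg S →
        TotallyNondeg
          ((postcomp Q (vertC A B u l m μ i.castSucc)
            (vertC A B u l m μ (Fin.last (m + 1)))).obj S) := by
    intro S hS j hj hdeg
    rcases main (S.map.app _ (S.shape.beadSimplex j hj)) with hc | hc
    · exact hS j hj hc
    · exact hc hdeg
  refine ⟨hpres, ?_⟩
  intro e c g
  set Gg := NecklaceIn.NecHom.g g.hom with hGg
  have hα' : (Gg ≫ e.obj.map).app (op (SimplexCategory.mk 0))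
      (c.obj.shape.vertex 0) = vertC A B u l m μ i.castSucc := by
    exact (congrArg (fun t => e.obj.map.app (op (SimplexCategory.mk 0)) t)
      (NecklaceIn.NecHom.hα g.hom)).trans e.obj.hα
  have hω' : (Gg ≫ e.obj.map).app (op (SimplexCategory.mk 0))
      (c.obj.shape.vertex (Fin.last _)) = vertC A B u l m μ (Fin.last (m + 1)) := by
    exact (congrArg (fun t => e.obj.map.app (op (SimplexCategory.mk 0)) t)
      (NecklaceIn.NecHom.hω g.hom)).trans e.obj.hω
  have hw : (Gg ≫ e.obj.map) ≫ Q = c.obj.map := by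
    exact (Category.assoc _ _ _).trans (NecklaceIn.NecHom.w g.hom)
  have htnd : TotallyNondeg (⟨c.obj.shape, Gg ≫ e.obj.map, hα', hω'⟩ :
      NecklaceIn (CC A B u l m μ) (vertC A B u l m μ i.castSucc)
        (vertC A B u l m μ (Fin.last (m + 1)))) := by
    intro j hj hdeg
    have h1 : IsDegenerate (Δ[m+1] : SSet)
        (((Gg ≫ e.obj.map) ≫ Q).app _ (c.obj.shape.beadSimplex j hj)) :=
      isDegenerate_map Q hdeg
    rw [hw] at h1
    exact c.property j hj h1
  have hPE : (ObjectProperty.lift (fun T => TotallyNondeg T)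
      (ObjectProperty.ι (fun S => TotallyNondeg S) ⋙
        postcomp Q (vertC A B u l m μ i.castSucc) (vertC A B u l m μ (Fin.last (m + 1))))
      (fun S => hpres S.obj S.property)).obj
      ⟨⟨c.obj.shape, Gg ≫ e.obj.map, hα', hω'⟩, htnd⟩ = c :=
    fullsub_ext (necklaceIn_ext rfl (heq_of_eq hw))
  refine ⟨⟨⟨⟨c.obj.shape, Gg ≫ e.obj.map, hα', hω'⟩, htnd⟩,
    ⟨⟨Gg, ?_, ?_, rfl⟩⟩⟩, ⟨hPE, ?_⟩, ?_⟩
  · exact NecklaceIn.NecHom.hα g.hom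
  · exact NecklaceIn.NecHom.hω g.hom
  · apply InducedCategory.hom_ext
    apply NecklaceIn.NecHom.ext'
    apply eq_of_heq
    refine HEq.trans (heq_of_eq ?_) (HEq.symm (necHom_g_eqToHom_comp_heq hPE g))
    exact hGg
  · rintro ⟨E'', ψ⟩ ⟨h'', hcond⟩
    have h2 : NecklaceIn.NecHom.g ψ.hom = NecklaceIn.NecHom.g (eqToHom h'' ≫ g).hom := by
      rw [← hcond]
      rfl
    have hψgH : HEq (NecklaceIn.NecHom.g ψ.hom) (NecklaceIn.NecHom.g g.hom) :=
      HEq.trans (heq_of_eq h2) (necHom_g_eqToHom_comp_heq h'' g)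
    have hs : E''.obj.shape = c.obj.shape := by
      rw [← h'']
      rfl
    have hobj : E'' = (⟨⟨c.obj.shape, Gg ≫ e.obj.map, hα', hω'⟩, htnd⟩ :
        CategoryTheory.ObjectProperty.FullSubcategory _) := by
      apply fullsub_ext
      apply necklaceIn_ext hs
      rw [← NecklaceIn.NecHom.w ψ.hom]
      exact heq_comp (congrArg Necklace.toSSet hs)
        (HEq.trans hψgH (heq_of_eq hGg.symm)) e.obj.map
    subst hobj
    refine congrArg (Sigma.mk _) ?_
    apply InducedCategory.hom_ext
    apply NecklaceIn.NecHom.ext'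
    exact eq_of_heq hψgH

end Cone

end Paper
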